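/- Let a, b, h > 0 with b > 1 and define 𝓗(λ) = b·e^{-hλ} - 1 - aλ. Then 𝓗 has a unique root λ♭ on (0,∞), and this root satisfies λ♭ > (b-1)/(bh + a). -/

import Mathlib

theorem auxiliary_H_unique_root (a b h : ℝ) (ha : 0 < a) (hb : 1 < b) (hh : 0 < h) :
    (∃! l : ℝ, 0 < l ∧ b * Real.exp (-(h * l)) - 1 - a * l = 0) ∧
    ∀ l : ℝ, 0 < l → b * Real.exp (-(h * l)) - 1 - a * l = 0 →
      (b - 1) / (b * h + a) < l := by
  set f : ℝ → ℝ := fun l => b * Real.exp (-(h * l)) - 1 - a * l with hf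
  have hb0 : 0 < b := lt_trans one_pos hb
  have hden : 0 < b * h + a := by positivity
  set l0 : ℝ := (b - 1) / (b * h + a) with hl0
  have hl0pos : 0 < l0 := div_pos (by linarith) hden
  have hanti : StrictAnti f := by
    intro x y hxy
    have he : Real.exp (-(h * y)) < Real.exp (-(h * x)) := by
      apply Real.exp_lt_exp.mpr; nlinarith
    have h1 : b * Real.exp (-(h * y)) < b * Real.exp (-(h * x)) :=
      mul_lt_mul_of_pos_left he hb0
    have h2 : a * x < a * y := mul_lt_mul_of_pos_left hxy ha
    simp only [hf]; linarith
  -- f l0 > 0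
  have hfl0 : 0 < f l0 := by
    have hx : -(h * l0) ≠ 0 := by
      have : 0 < h * l0 := mul_pos hh hl0pos
      linarith
    have he : -(h * l0) + 1 < Real.exp (-(h * l0)) := Real.add_one_lt_exp hx
    have hmul : (b * h + a) * l0 = b - 1 := by
      rw [hl0, mul_div_assoc']; exact mul_div_cancel_left₀ _ hden.ne'
    have : b * (-(h * l0) + 1) < b * Real.exp (-(h * l0)) :=
      mul_lt_mul_of_pos_left he hb0
    simp only [hf]; nlinarith
  -- f (b/a) < 0
  set l1 : ℝ := b / a with hl1
  have hl1pos : 0 < l1 := div_pos hb0 ha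
  have hfl1 : f l1 < 0 := by
    have he : Real.exp (-(h * l1)) < 1 := by
      rw [Real.exp_lt_one_iff]
      have : 0 < h * l1 := mul_pos hh hl1pos
      linarith
    have : b * Real.exp (-(h * l1)) < b * 1 := mul_lt_mul_of_pos_left he hb0
    have hal1 : a * l1 = b := by rw [hl1, mul_div_assoc']; exact mul_div_cancel_left₀ _ ha.ne'
    simp only [hf]; nlinarith
  have hle : l0 ≤ l1 := le_of_lt (hanti.lt_iff_gt.mp (by linarith))
  have hcont : ContinuousOn f (Set.Icc l0 l1) := by
    apply Continuous.continuousOn; fun_prop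
  have hex : ∃ c ∈ Set.Icc l0 l1, f c = 0 := by
    have := intermediate_value_Icc' hle hcont
    have h0 : (0 : ℝ) ∈ Set.Icc (f l1) (f l0) := ⟨le_of_lt hfl1, le_of_lt hfl0⟩
    obtain ⟨c, hc, hfc⟩ := this h0
    exact ⟨c, hc, hfc⟩
  obtain ⟨c, ⟨hcl, hcr⟩, hfc⟩ := hex
  have hcpos : 0 < c := lt_of_lt_of_le hl0pos hcl
  constructor
  · refine ⟨c, ⟨hcpos, hfc⟩, ?_⟩
    rintro y ⟨hy, hfy⟩
    have hfy' : f y = 0 := hfy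
    exact hanti.injective (hfy'.trans hfc.symm)
  · intro l hl hfl
    have hfl' : f l = 0 := hfl
    have : f l < f l0 := by linarith
    exact hanti.lt_iff_gt.mp this
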